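/- Let K be a field, f ∈ K[x] a monic irreducible separable polynomial of degree d, and L a splitting field of f over K in which f has the distinct roots α_1, …, α_d. Let I be a finite index set, e_i positive integers, and X ∈ Mat_n(K) such that K^n as a K[x]-module via X is isomorphic to ⊕_{i∈I} K[x]/(f^{e_i}). Then L^n, as an L[x]-module with x acting as the entrywise image of X in Mat_n(L), is isomorphic to ⊕_{j=1}^{d} ⊕_{i∈I} L[x]/((x−α_j)^{e_i}). -/

import Mathlib

open scoped DirectSum


open Polynomial TensorProduct

set_option maxHeartbeats 4000000
set_option synthInstance.maxHeartbeats 400000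

section Aux
variable (K L : Type*) [Field K] [Field L] [Algebra K L]

/-- multiplication by `X` as a `K`-linear map. -/
noncomputable def xmul (M : Type*) [AddCommGroup M] [Module K M]
    [Module (Polynomial K) M] [IsScalarTower K (Polynomial K) M] : M →ₗ[K] M :=
  (LinearMap.lsmul (Polynomial K) M (Polynomial.X)).restrictScalars K

@[simp] lemma xmul_apply (M : Type*) [AddCommGroup M] [Module K M]
    [Module (Polynomial K) M] [IsScalarTower K (Polynomial K) M] (m : M) :
    xmul K M m = (Polynomial.X : Polynomial K) • m := rfl

noncomputable def tqF (I : Ideal (Polynomial K)) :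
    (L ⊗[K] ((Polynomial K) ⧸ I)) →ₐ[L]
      (Polynomial L ⧸ I.map (Polynomial.mapRingHom (algebraMap K L))) :=
  Algebra.TensorProduct.lift
    (Algebra.ofId L _)
    (Ideal.quotientMapₐ _ (Polynomial.mapAlgHom (Algebra.ofId K L)) Ideal.le_comap_map)
    (fun _ _ => Commute.all _ _)

lemma tqF_tmul (I : Ideal (Polynomial K)) (c : L) (p : Polynomial K) :
    tqF K L I (c ⊗ₜ Ideal.Quotient.mk I p) =
      Ideal.Quotient.mk _ (Polynomial.C c * p.map (algebraMap K L)) := by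
  simp [tqF, Algebra.TensorProduct.lift_tmul, Ideal.quotient_map_mkₐ, Algebra.ofId_apply]
  rfl

lemma tqG_aux (I : Ideal (Polynomial K)) :
    ∀ a ∈ I.map (Polynomial.mapRingHom (algebraMap K L)),
      (Polynomial.aeval ((1:L) ⊗ₜ[K] (Ideal.Quotient.mk I Polynomial.X))) a = 0 := by
  intro a ha
  induction ha using Submodule.span_induction with
  | mem x hx =>
    obtain ⟨p, hp, rfl⟩ := hx
    have hmap : (Polynomial.mapRingHom (algebraMap K L)) p = p.map (algebraMap K L) := rfl
    rw [hmap, Polynomial.aeval_map_algebraMap]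
    have h2 : (1:L) ⊗ₜ[K] (Ideal.Quotient.mk I Polynomial.X)
        = Algebra.TensorProduct.includeRight (R := K) (A := L)
            (Ideal.Quotient.mk I Polynomial.X) := rfl
    rw [h2, Polynomial.aeval_algHom_apply]
    have h3 : Polynomial.aeval (Ideal.Quotient.mk I Polynomial.X) p = Ideal.Quotient.mk I p := by
      have h4 := Polynomial.aeval_algHom_apply (Ideal.Quotient.mkₐ K I) Polynomial.X p
      simpa [Polynomial.aeval_X_left_apply] using h4
    rw [h3, Ideal.Quotient.eq_zero_iff_mem.mpr hp, map_zero]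
  | zero => exact map_zero _
  | add x y _ _ hx hy => rw [map_add, hx, hy, add_zero]
  | smul r x _ hx => rw [smul_eq_mul, map_mul, hx]; exact mul_zero ((Polynomial.aeval ((1:L) ⊗ₜ[K] (Ideal.Quotient.mk I Polynomial.X))) r)

noncomputable def tqG (I : Ideal (Polynomial K)) :
    (Polynomial L ⧸ I.map (Polynomial.mapRingHom (algebraMap K L))) →ₐ[L]
      (L ⊗[K] ((Polynomial K) ⧸ I)) :=
  Ideal.Quotient.liftₐ _
    (Polynomial.aeval ((1:L) ⊗ₜ[K] (Ideal.Quotient.mk I Polynomial.X)))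
    (tqG_aux K L I)

lemma tqG_mk (I : Ideal (Polynomial K)) (q : Polynomial L) :
    tqG K L I (Ideal.Quotient.mk _ q) =
      Polynomial.aeval ((1:L) ⊗ₜ[K] (Ideal.Quotient.mk I Polynomial.X)) q := rfl

/-- Base change of a quotient of the polynomial ring. -/
noncomputable def tensorQuotEquiv (I : Ideal (Polynomial K)) :
    (L ⊗[K] ((Polynomial K) ⧸ I)) ≃ₐ[L]
      (Polynomial L ⧸ I.map (Polynomial.mapRingHom (algebraMap K L))) :=
  AlgEquiv.ofAlgHom (tqF K L I) (tqG K L I)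
    (by
      apply Ideal.Quotient.algHom_ext
      apply Polynomial.algHom_ext
      show tqF K L I (tqG K L I (Ideal.Quotient.mk _ Polynomial.X)) = _
      rw [tqG_mk, Polynomial.aeval_X]
      have : ((1:L) ⊗ₜ[K] (Ideal.Quotient.mk I Polynomial.X))
          = (1:L) ⊗ₜ[K] (Ideal.Quotient.mk I Polynomial.X) := rfl
      rw [tqF_tmul]
      simp)
    (by
      apply Algebra.TensorProduct.ext
      · exact AlgHom.ext fun c => by
          show tqG K L I (tqF K L I (c ⊗ₜ 1)) = c ⊗ₜ 1
          have h1 : (1 : (Polynomial K) ⧸ I) = Ideal.Quotient.mk I 1 := rfl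
          rw [h1, tqF_tmul]
          simp only [Polynomial.map_one, mul_one]
          have h2 : (Ideal.Quotient.mk (I.map (Polynomial.mapRingHom (algebraMap K L)))
              (Polynomial.C c)) = algebraMap L _ c := rfl
          rw [h2, AlgHom.commutes]
          show algebraMap L (L ⊗[K] ((Polynomial K) ⧸ I)) c = _
          rw [Algebra.TensorProduct.algebraMap_apply]
          rfl
      · apply Ideal.Quotient.algHom_ext
        apply Polynomial.algHom_ext
        show tqG K L I (tqF K L I ((1:L) ⊗ₜ (Ideal.Quotient.mk I Polynomial.X))) = _
        rw [tqF_tmul, map_one, one_mul, Polynomial.map_X, tqG_mk, Polynomial.aeval_X]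
        rfl)

lemma smul_mk_poly {R : Type*} [CommRing R] (I : Ideal (Polynomial R)) (r p : Polynomial R) :
    r • (Ideal.Quotient.mk I p) = Ideal.Quotient.mk I (r * p) := rfl

lemma tensorQuotEquiv_comm (I : Ideal (Polynomial K))
    (t : L ⊗[K] ((Polynomial K) ⧸ I)) :
    tensorQuotEquiv K L I (((xmul K ((Polynomial K) ⧸ I)).baseChange L) t) =
      (Polynomial.X : Polynomial L) • tensorQuotEquiv K L I t := by
  induction t with
  | zero => simp
  | add x y hx hy => rw [map_add, map_add, hx, hy, map_add, smul_add]
  | tmul c q =>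
    obtain ⟨p, rfl⟩ := Ideal.Quotient.mk_surjective q
    rw [LinearMap.baseChange_tmul, xmul_apply, smul_mk_poly]
    show tensorQuotEquiv K L I (c ⊗ₜ Ideal.Quotient.mk I _) =
      Polynomial.X • tensorQuotEquiv K L I (c ⊗ₜ Ideal.Quotient.mk I p)
    show tqF K L I (c ⊗ₜ Ideal.Quotient.mk I _) =
      Polynomial.X • tqF K L I (c ⊗ₜ Ideal.Quotient.mk I p)
    rw [tqF_tmul, tqF_tmul, Polynomial.map_mul, Polynomial.map_X, smul_mk_poly]
    ring_nf

noncomputable def crtAlgEquiv {m : ℕ} (J : Fin m → Ideal (Polynomial L))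
    (h : Pairwise (Function.onFun IsCoprime J)) :
    ((Polynomial L) ⧸ ⨅ j, J j) ≃ₐ[Polynomial L] ∀ j, (Polynomial L) ⧸ J j :=
  AlgEquiv.ofRingEquiv (f := Ideal.quotientInfRingEquivPiQuotient J h) (by
    intro r
    rfl)

lemma span_pow_prod_eq {m : ℕ} (β : Fin m → L) (hβ : Function.Injective β) (e : ℕ) :
    Ideal.span {(∏ j, (Polynomial.X - Polynomial.C (β j))) ^ e} =
      ⨅ j, Ideal.span {(Polynomial.X - Polynomial.C (β j)) ^ e} := by
  rw [← Finset.prod_pow]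
  rw [Ideal.iInf_span_singleton]
  intro i j hij
  exact (Polynomial.isCoprime_X_sub_C_of_isUnit_sub
    (IsUnit.mk0 _ (sub_ne_zero.mpr (fun hc => hij (hβ hc))))).pow

/-- dependent reindexing of a double Pi type into a product-indexed Pi type. -/
def piProdLequiv (R : Type*) [Semiring R] {ι κ : Type*} (M : κ → ι → Type*)
    [∀ j i, AddCommMonoid (M j i)] [∀ j i, Module R (M j i)] :
    (∀ i, ∀ j, M j i) ≃ₗ[R] ∀ p : κ × ι, M p.1 p.2 where
  toFun f p := f p.2 p.1
  map_add' _ _ := rfl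
  map_smul' _ _ := rfl
  invFun g i j := g (j, i)
  left_inv _ := rfl
  right_inv _ := rfl

end Aux

open scoped DirectSum

/-- Let `f` be a monic irreducible separable polynomial of degree `d`, split over `L` with
distinct roots `α 1, …, α d`. If `K^n` as a `K[x]`-module via `X` is
`⨁ i, K[x]/(f ^ e i)`, then `L^n` as an `L[x]`-module via the image of `X` is
`⨁ (j, i), L[x]/((x - α j) ^ e i)`. -/
theorem baseChange_type_separable
    (K L : Type*) [Field K] [Field L] [Algebra K L]
    (n : ℕ) (X : Matrix (Fin n) (Fin n) K)
    (f : Polynomial K) (hmonic : f.Monic) (hirr : Irreducible f) (hsep : f.Separable)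
    (d : ℕ) (hd : f.natDegree = d)
    [Polynomial.IsSplittingField K L f]
    (α : Fin d → L) (hinj : Function.Injective α)
    (hfactor : f.map (algebraMap K L) =
      ∏ j : Fin d, (Polynomial.X - Polynomial.C (α j)))
    (I : Type*) [Fintype I] [DecidableEq I] (e : I → ℕ) (hpos : ∀ i, 0 < e i)
    (hX : Nonempty ((Module.AEval' X.mulVecLin) ≃ₗ[Polynomial K]
      (⨁ i : I, Polynomial K ⧸ Ideal.span {f ^ e i}))) :
    Nonempty ((Module.AEval' (X.map (algebraMap K L)).mulVecLin) ≃ₗ[Polynomial L]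
      (⨁ p : Fin d × I,
        Polynomial L ⧸ Ideal.span
          {(Polynomial.X - Polynomial.C (α p.1)) ^ e p.2})) := by
  classical
  set σ := algebraMap K L
  set Q : I → Type _ := fun i => Polynomial K ⧸ Ideal.span {f ^ e i} with hQ
  -- the `K`-linear structure equivalence from the hypothesis
  let h'' : Module.AEval' X.mulVecLin ≃ₗ[Polynomial K] ∀ i, Q i :=
    hX.some.trans (DirectSum.linearEquivFunOnFintype (Polynomial K) I _)
  let gK : (Fin n → K) ≃ₗ[K] (∀ i, Q i) :=
    (Module.AEval'.of X.mulVecLin).trans (h''.restrictScalars K)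
  have hgK : ∀ w, gK (X.mulVecLin w) = (Polynomial.X : Polynomial K) • gK w := by
    intro w
    show h'' (Module.AEval'.of X.mulVecLin (X.mulVecLin w))
      = (Polynomial.X : Polynomial K) • h'' (Module.AEval'.of X.mulVecLin w)
    rw [← Module.AEval'.X_smul_of, map_smul]
  -- step 1 : `L^n ≃ L ⊗ K^n`
  let e₁ : (Fin n → L) ≃ₗ[L] L ⊗[K] (Fin n → K) :=
    (TensorProduct.piScalarRight K L L (Fin n)).symm
  have key₁ : ∀ t : L ⊗[K] (Fin n → K),
      TensorProduct.piScalarRight K L L (Fin n) ((X.mulVecLin.baseChange L) t)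
        = (X.map σ).mulVecLin (TensorProduct.piScalarRight K L L (Fin n) t) := by
    intro t
    induction t with
    | zero => simp
    | add x y hx hy => rw [map_add, map_add, hx, hy, map_add, map_add]
    | tmul c w =>
      rw [LinearMap.baseChange_tmul]
      funext j
      simp only [TensorProduct.piScalarRight_apply, TensorProduct.piScalarRightHom_tmul,
        Matrix.mulVecLin_apply, Matrix.mulVec, dotProduct, Matrix.map_apply]
      rw [Finset.sum_smul]
      refine Finset.sum_congr rfl fun k _ => ?_
      simp [Algebra.smul_def, map_mul, mul_assoc, σ]
  have h₁ : ∀ v, e₁ ((X.map σ).mulVecLin v) = (X.mulVecLin.baseChange L) (e₁ v) := by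
    intro v
    rw [LinearEquiv.symm_apply_eq, key₁, LinearEquiv.apply_symm_apply]
  -- step 2 : base change of `gK`
  let e₂ : (L ⊗[K] (Fin n → K)) ≃ₗ[L] L ⊗[K] (∀ i, Q i) :=
    LinearEquiv.baseChange K L _ _ gK
  have h₂ : ∀ t, e₂ ((X.mulVecLin.baseChange L) t)
      = ((xmul K (∀ i, Q i)).baseChange L) (e₂ t) := by
    intro t
    induction t with
    | zero => simp
    | add x y hx hy => rw [map_add, map_add, hx, hy, map_add, map_add]
    | tmul c w =>
      rw [LinearMap.baseChange_tmul]
      show (gK.toLinearMap.baseChange L) (c ⊗ₜ X.mulVecLin w)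
        = ((xmul K (∀ i, Q i)).baseChange L) ((gK.toLinearMap.baseChange L) (c ⊗ₜ w))
      rw [LinearMap.baseChange_tmul, LinearMap.baseChange_tmul, LinearMap.baseChange_tmul]
      show c ⊗ₜ[K] (gK (X.mulVecLin w)) = c ⊗ₜ[K] (xmul K (∀ i, Q i) (gK w))
      rw [hgK, xmul_apply]
  -- step 3 : tensor commutes with finite products
  let e₃ : (L ⊗[K] (∀ i, Q i)) ≃ₗ[L] ∀ i, L ⊗[K] Q i :=
    TensorProduct.piRight K L L Q
  have h₃ : ∀ t, e₃ (((xmul K (∀ i, Q i)).baseChange L) t)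
      = fun i => ((xmul K (Q i)).baseChange L) (e₃ t i) := by
    intro t
    induction t with
    | zero =>
      funext i
      simp
    | add x y hx hy =>
      rw [map_add, map_add, hx, hy, map_add]
      funext i
      simp [Pi.add_apply, map_add]
    | tmul c w =>
      rw [LinearMap.baseChange_tmul]
      funext i
      simp only [e₃, TensorProduct.piRight_apply, TensorProduct.piRightHom_tmul,
        LinearMap.baseChange_tmul]
      rfl
  -- step 4 : base change of each quotient
  let e₄ : (∀ i, L ⊗[K] Q i) ≃ₗ[L]
      ∀ i, Polynomial L ⧸ (Ideal.span {f ^ e i}).map (Polynomial.mapRingHom σ) :=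
    LinearEquiv.piCongrRight fun i => (tensorQuotEquiv K L (Ideal.span {f ^ e i})).toLinearEquiv
  have h₄ : ∀ w : ∀ i, L ⊗[K] Q i,
      e₄ (fun i => ((xmul K (Q i)).baseChange L) (w i))
        = (Polynomial.X : Polynomial L) • e₄ w := by
    intro w
    funext i
    show tensorQuotEquiv K L (Ideal.span {f ^ e i}) (((xmul K (Q i)).baseChange L) (w i))
      = ((Polynomial.X : Polynomial L) • e₄ w) i
    rw [tensorQuotEquiv_comm]
    rfl
  -- step 5 : Chinese remainder theorem
  have hcop : ∀ m : ℕ, Pairwise (Function.onFun IsCoprime fun j : Fin d =>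
      Ideal.span {(Polynomial.X - Polynomial.C (α j)) ^ m}) := by
    intro m j k hjk
    exact (Ideal.isCoprime_span_singleton_iff _ _).mpr
      ((Polynomial.isCoprime_X_sub_C_of_isUnit_sub
        (IsUnit.mk0 _ (sub_ne_zero.mpr fun hc => hjk (hinj hc)))).pow)
  have hJ : ∀ i, (Ideal.span {f ^ e i}).map (Polynomial.mapRingHom σ)
      = ⨅ j : Fin d, Ideal.span {(Polynomial.X - Polynomial.C (α j)) ^ e i} := by
    intro i
    rw [Ideal.map_span, Set.image_singleton]
    have hmap : (Polynomial.mapRingHom σ) (f ^ e i) = (Polynomial.map σ f) ^ (e i) := by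
      simp
    rw [hmap, hfactor, span_pow_prod_eq (L := L) α hinj (e i)]
  let c₅ : ∀ i, (Polynomial L ⧸ (Ideal.span {f ^ e i}).map (Polynomial.mapRingHom σ))
      ≃ₗ[Polynomial L]
      ∀ j : Fin d, Polynomial L ⧸ Ideal.span {(Polynomial.X - Polynomial.C (α j)) ^ e i} :=
    fun i => (Submodule.quotEquivOfEq _ _ (hJ i)).trans
      (crtAlgEquiv (L := L) (fun j => Ideal.span {(Polynomial.X - Polynomial.C (α j)) ^ e i})
        (hcop (e i))).toLinearEquiv
  let e₅ : (∀ i, Polynomial L ⧸ (Ideal.span {f ^ e i}).map (Polynomial.mapRingHom σ)) ≃ₗ[L]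
      ∀ i, ∀ j : Fin d, Polynomial L ⧸ Ideal.span {(Polynomial.X - Polynomial.C (α j)) ^ e i} :=
    LinearEquiv.piCongrRight fun i => (c₅ i).restrictScalars L
  have h₅ : ∀ w, e₅ ((Polynomial.X : Polynomial L) • w)
      = (Polynomial.X : Polynomial L) • e₅ w := by
    intro w
    funext i
    show c₅ i (((Polynomial.X : Polynomial L) • w) i) = _
    rw [Pi.smul_apply, map_smul]
    rfl
  -- step 6 : reindexing
  let e₆ : (∀ i, ∀ j : Fin d, Polynomial L ⧸ Ideal.span
        {(Polynomial.X - Polynomial.C (α j)) ^ e i}) ≃ₗ[L]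
      (⨁ p : Fin d × I, Polynomial L ⧸ Ideal.span
        {(Polynomial.X - Polynomial.C (α p.1)) ^ e p.2}) :=
    ((piProdLequiv (Polynomial L)
        (fun (j : Fin d) (i : I) => Polynomial L ⧸ Ideal.span
          {(Polynomial.X - Polynomial.C (α j)) ^ e i})).trans
      (DirectSum.linearEquivFunOnFintype (Polynomial L) (Fin d × I) _).symm).restrictScalars L
  have h₆ : ∀ w, e₆ ((Polynomial.X : Polynomial L) • w)
      = (Polynomial.X : Polynomial L) • e₆ w := by
    intro w
    exact map_smul (((piProdLequiv (Polynomial L) _).trans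
      (DirectSum.linearEquivFunOnFintype (Polynomial L) (Fin d × I) _).symm)) _ _
  -- assembling
  let G : (Fin n → L) ≃ₗ[L] (⨁ p : Fin d × I, Polynomial L ⧸ Ideal.span
      {(Polynomial.X - Polynomial.C (α p.1)) ^ e p.2}) :=
    e₁ ≪≫ₗ e₂ ≪≫ₗ e₃ ≪≫ₗ e₄ ≪≫ₗ e₅ ≪≫ₗ e₆
  have hG : ∀ v, G ((X.map σ).mulVecLin v) = (Polynomial.X : Polynomial L) • G v := by
    intro v
    show e₆ (e₅ (e₄ (e₃ (e₂ (e₁ ((X.map σ).mulVecLin v)))))) = _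
    rw [h₁, h₂, h₃, h₄, h₅, h₆]
    rfl
  exact ⟨LinearEquiv.ofAEval _ G hG⟩
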